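/- Let H be a finite-dimensional quasitriangular Hopf algebra with R-matrix R = Σᵢ aᵢ ⊗ bᵢ and let X be the dual coadjoint representation. Then the map ψ_X := S⁻¹ ∘ ψ : X* → X, where ψ(f) = Σ_{i,j} f(b_j a_i)·a_j b_i is the Drinfeld map, is a morphism of H-modules. -/

import Mathlib

open TensorProduct

/-- The `R`-matrix as an element of `H ⊗ H`, given by a finite family. -/
noncomputable def Rmat {k H : Type} [Field k] [Ring H] [HopfAlgebra k H]
    {ι : Type} (s : Finset ι) (a b : ι → H) : H ⊗[k] H :=
  ∑ i ∈ s, a i ⊗ₜ[k] b i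

/-- The Drinfeld map `ψ(f) = Σ_{i,j} f(bⱼ aᵢ) • aⱼ bᵢ` associated with the
`R`-matrix `R = Σᵢ aᵢ ⊗ bᵢ`. -/
noncomputable def drinfeld {k H : Type} [Field k] [Ring H] [HopfAlgebra k H]
    {ι : Type} (s : Finset ι) (a b : ι → H) (f : H →ₗ[k] k) : H :=
  ∑ i ∈ s, ∑ j ∈ s, f (b j * a i) • (a j * b i)

section Helpers
open Coalgebra HopfAlgebra
variable {k H : Type} [Field k] [Ring H] [HopfAlgebra k H]

local notation "S" => HopfAlgebra.antipode (R := k) (A := H)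
local notation "ε" => Coalgebra.counit (R := k) (A := H)

lemma ctL (z : H) {ι : Type*} (rz : Coalgebra.Repr k z ι) (g : H →ₗ[k] H) :
    ∑ i ∈ rz.index, ε (rz.left i) • g (rz.right i) = g z := by
  have h := Coalgebra.sum_counit_tmul_eq rz
  have h2 := congrArg (TensorProduct.lid k H ∘ LinearMap.lTensor k g) h
  simp only [Function.comp_apply, map_sum, LinearMap.lTensor_tmul, lid_tmul] at h2
  simpa using h2

lemma ctR (z : H) {ι : Type*} (rz : Coalgebra.Repr k z ι) (g : H →ₗ[k] H) :
    ∑ i ∈ rz.index, ε (rz.right i) • g (rz.left i) = g z := by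
  have h := Coalgebra.sum_tmul_counit_eq rz
  have h2 := congrArg (TensorProduct.rid k H ∘ LinearMap.rTensor k g) h
  simp only [Function.comp_apply, map_sum, LinearMap.rTensor_tmul, rid_tmul] at h2
  simpa using h2

noncomputable def mulRepr (u v : H) {ι₁ ι₂ : Type*} (ru : Coalgebra.Repr k u ι₁) (rv : Coalgebra.Repr k v ι₂) :
    Coalgebra.Repr k (u * v) (ι₁ × ι₂) where
  index := ru.index ×ˢ rv.index
  left p := ru.left p.1 * rv.left p.2
  right p := ru.right p.1 * rv.right p.2
  eq := by
    rw [Finset.sum_product]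
    have : ∀ i ∈ ru.index, ∑ j ∈ rv.index,
        (ru.left i * rv.left j) ⊗ₜ[k] (ru.right i * rv.right j)
        = (ru.left i ⊗ₜ[k] ru.right i) * ∑ j ∈ rv.index, rv.left j ⊗ₜ[k] rv.right j := by
      intro i _
      rw [Finset.mul_sum]
      exact Finset.sum_congr rfl fun j _ => by simp [Algebra.TensorProduct.tmul_mul_tmul]
    rw [Finset.sum_congr rfl this, ← Finset.sum_mul, ru.eq, rv.eq, ← Bialgebra.comul_mul]

lemma sum_swap4 {M : Type*} [AddCommMonoid M] {α β : Type*} {γ : α → Type*} {δ : β → Type*}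
    (s : Finset α) (t : Finset β) (u : ∀ a, Finset (γ a)) (v : ∀ b, Finset (δ b))
    (F : ∀ a, γ a → ∀ b, δ b → M) :
    ∑ a ∈ s, ∑ c ∈ u a, ∑ b ∈ t, ∑ d ∈ v b, F a c b d
      = ∑ b ∈ t, ∑ d ∈ v b, ∑ a ∈ s, ∑ c ∈ u a, F a c b d := by
  rw [Finset.sum_congr rfl fun a _ => Finset.sum_comm]
  rw [Finset.sum_comm]
  refine Finset.sum_congr rfl fun b _ => ?_
  rw [Finset.sum_congr rfl fun a _ => Finset.sum_comm]
  exact Finset.sum_comm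

lemma antipode_mul' (x y : H) : S (x * y) = S y * S x := by
  classical
  have rx : Coalgebra.Repr k x (H × H) := Coalgebra.Repr.arbitrary k x
  have ry : Coalgebra.Repr k y (H × H) := Coalgebra.Repr.arbitrary k y
  have rx1 : ∀ i : H × H, Coalgebra.Repr k (rx.left i) (H × H) := fun i => Coalgebra.Repr.arbitrary k _
  have rx2 : ∀ i : H × H, Coalgebra.Repr k (rx.right i) (H × H) := fun i => Coalgebra.Repr.arbitrary k _
  have ry1 : ∀ j : H × H, Coalgebra.Repr k (ry.left j) (H × H) := fun j => Coalgebra.Repr.arbitrary k _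
  have ry2 : ∀ j : H × H, Coalgebra.Repr k (ry.right j) (H × H) := fun j => Coalgebra.Repr.arbitrary k _
  have step1 : S y * S x = ∑ j ∈ ry.index, ∑ n ∈ (ry2 j).index, ∑ i ∈ rx.index,
      ∑ m ∈ (rx2 i).index,
      (S (ry.left j) * S (rx.left i)) *
        ((rx2 i).left m * ((ry2 j).left n * S ((rx2 i).right m * (ry2 j).right n))) := by
    have hx : S x = ∑ i ∈ rx.index, ε (rx.right i) • S (rx.left i) := (ctR x rx S).symm
    have hy : S y = ∑ j ∈ ry.index, ε (ry.right j) • S (ry.left j) := (ctR y ry S).symm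
    rw [hx, hy, Finset.sum_mul_sum]
    refine Finset.sum_congr rfl fun j _ => ?_
    have inner : ∀ i ∈ rx.index,
        (ε (ry.right j) • S (ry.left j)) * (ε (rx.right i) • S (rx.left i))
        = ∑ m ∈ (rx2 i).index, ∑ n ∈ (ry2 j).index,
          (S (ry.left j) * S (rx.left i)) *
            ((rx2 i).left m * ((ry2 j).left n * S ((rx2 i).right m * (ry2 j).right n))) := by
      intro i _
      have h1 : (ε (ry.right j) • S (ry.left j)) * (ε (rx.right i) • S (rx.left i))
          = (S (ry.left j) * S (rx.left i)) * (ε (rx.right i * ry.right j) • (1:H)) := by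
        rw [Bialgebra.counit_mul]
        simp [smul_mul_assoc, mul_smul_comm, smul_smul, mul_comm]
      rw [h1, ← sum_mul_antipode_eq_smul (mulRepr _ _ (rx2 i) (ry2 j)), Finset.mul_sum]
      show _ = ∑ m ∈ (rx2 i).index, ∑ n ∈ (ry2 j).index, _
      rw [← Finset.sum_product']
      refine Finset.sum_congr rfl fun p _ => ?_
      show (S (ry.left j) * S (rx.left i)) *
          ((mulRepr _ _ (rx2 i) (ry2 j)).left p * S ((mulRepr _ _ (rx2 i) (ry2 j)).right p)) = _
      simp only [mulRepr]
      rw [mul_assoc ((rx2 i).left p.1)]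
    rw [Finset.sum_congr rfl inner]
    rw [Finset.sum_congr rfl (fun i _ => Finset.sum_comm)]
    exact Finset.sum_comm
  -- Step 2: coassociativity on x
  set Λ : H ⊗[k] (H ⊗[k] H) →ₗ[k] H :=
    ∑ j ∈ ry.index, ∑ n ∈ (ry2 j).index,
      LinearMap.mul' k H ∘ₗ TensorProduct.map
        (LinearMap.mulLeft k (S (ry.left j)) ∘ₗ S)
        (LinearMap.mul' k H ∘ₗ TensorProduct.map LinearMap.id
          (LinearMap.mulLeft k ((ry2 j).left n) ∘ₗ S ∘ₗ
            LinearMap.mulRight k ((ry2 j).right n))) with hΛ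
  have hΛap : ∀ p q r : H, Λ (p ⊗ₜ[k] (q ⊗ₜ[k] r)) = ∑ j ∈ ry.index, ∑ n ∈ (ry2 j).index,
      (S (ry.left j) * S p) * (q * ((ry2 j).left n * S (r * (ry2 j).right n))) := by
    intro p q r
    simp [hΛ, LinearMap.sum_apply, LinearMap.mul'_apply]
  have hco := congrArg Λ (Coalgebra.sum_tmul_tmul_eq rx rx1 rx2)
  rw [map_sum, map_sum] at hco
  simp only [map_sum, hΛap] at hco
  have step2 : ∑ j ∈ ry.index, ∑ n ∈ (ry2 j).index, ∑ i ∈ rx.index, ∑ m ∈ (rx2 i).index,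
      (S (ry.left j) * S (rx.left i)) *
        ((rx2 i).left m * ((ry2 j).left n * S ((rx2 i).right m * (ry2 j).right n)))
      = ∑ j ∈ ry.index, ∑ n ∈ (ry2 j).index, ∑ i ∈ rx.index, ∑ m ∈ (rx1 i).index,
      (S (ry.left j) * S ((rx1 i).left m)) *
        ((rx1 i).right m * ((ry2 j).left n * S (rx.right i * (ry2 j).right n))) := by
    calc ∑ j ∈ ry.index, ∑ n ∈ (ry2 j).index, ∑ i ∈ rx.index, ∑ m ∈ (rx2 i).index,
        (S (ry.left j) * S (rx.left i)) *
          ((rx2 i).left m * ((ry2 j).left n * S ((rx2 i).right m * (ry2 j).right n)))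
        = ∑ i ∈ rx.index, ∑ m ∈ (rx2 i).index, ∑ j ∈ ry.index, ∑ n ∈ (ry2 j).index,
        (S (ry.left j) * S (rx.left i)) *
          ((rx2 i).left m * ((ry2 j).left n * S ((rx2 i).right m * (ry2 j).right n))) :=
        sum_swap4 _ _ _ _ _
      _ = ∑ i ∈ rx.index, ∑ m ∈ (rx1 i).index, ∑ j ∈ ry.index, ∑ n ∈ (ry2 j).index,
        (S (ry.left j) * S ((rx1 i).left m)) *
          ((rx1 i).right m * ((ry2 j).left n * S (rx.right i * (ry2 j).right n))) := hco.symm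
      _ = _ := (sum_swap4 _ _ _ _ _).symm
  set G : H →ₗ[k] H := ∑ j ∈ ry.index, ∑ n ∈ (ry2 j).index,
      LinearMap.mulLeft k (S (ry.left j)) ∘ₗ LinearMap.mulLeft k ((ry2 j).left n) ∘ₗ S ∘ₗ
        LinearMap.mulRight k ((ry2 j).right n) with hG
  have hGap : ∀ w : H, G w = ∑ j ∈ ry.index, ∑ n ∈ (ry2 j).index,
      S (ry.left j) * ((ry2 j).left n * S (w * (ry2 j).right n)) := by
    intro w
    simp [hG, LinearMap.sum_apply]
  have step3 : ∑ j ∈ ry.index, ∑ n ∈ (ry2 j).index, ∑ i ∈ rx.index, ∑ m ∈ (rx1 i).index,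
      (S (ry.left j) * S ((rx1 i).left m)) *
        ((rx1 i).right m * ((ry2 j).left n * S (rx.right i * (ry2 j).right n)))
      = ∑ j ∈ ry.index, ∑ n ∈ (ry2 j).index,
        S (ry.left j) * ((ry2 j).left n * S (x * (ry2 j).right n)) := by
    calc ∑ j ∈ ry.index, ∑ n ∈ (ry2 j).index, ∑ i ∈ rx.index, ∑ m ∈ (rx1 i).index,
        (S (ry.left j) * S ((rx1 i).left m)) *
          ((rx1 i).right m * ((ry2 j).left n * S (rx.right i * (ry2 j).right n)))
        = ∑ i ∈ rx.index, ∑ j ∈ ry.index, ∑ n ∈ (ry2 j).index, ∑ m ∈ (rx1 i).index,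
        (S (ry.left j) * S ((rx1 i).left m)) *
          ((rx1 i).right m * ((ry2 j).left n * S (rx.right i * (ry2 j).right n))) := by
          rw [Finset.sum_congr rfl fun j _ => Finset.sum_comm]
          exact Finset.sum_comm
      _ = ∑ i ∈ rx.index, ε (rx.left i) • G (rx.right i) := by
          refine Finset.sum_congr rfl fun i _ => ?_
          have collapse : ∀ j ∈ ry.index, ∀ n ∈ (ry2 j).index,
              ∑ m ∈ (rx1 i).index, (S (ry.left j) * S ((rx1 i).left m)) *
                ((rx1 i).right m * ((ry2 j).left n * S (rx.right i * (ry2 j).right n)))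
              = ε (rx.left i) • (S (ry.left j) *
                  ((ry2 j).left n * S (rx.right i * (ry2 j).right n))) := by
            intro j _ n _
            have assoc1 : ∀ m, (S (ry.left j) * S ((rx1 i).left m)) *
                ((rx1 i).right m * ((ry2 j).left n * S (rx.right i * (ry2 j).right n)))
                = S (ry.left j) * ((S ((rx1 i).left m) * (rx1 i).right m) *
                    ((ry2 j).left n * S (rx.right i * (ry2 j).right n))) := by
              intro m
              simp only [mul_assoc]
            rw [Finset.sum_congr rfl fun m _ => assoc1 m, ← Finset.mul_sum, ← Finset.sum_mul,
              sum_antipode_mul_eq_smul (rx1 i), smul_mul_assoc, one_mul, mul_smul_comm]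
          rw [Finset.sum_congr rfl fun j hj => Finset.sum_congr rfl fun n hn => collapse j hj n hn]
          rw [Finset.sum_congr rfl fun j _ => (Finset.smul_sum).symm, ← Finset.smul_sum, hGap]
      _ = G x := ctL x rx G
      _ = _ := hGap x
  have step45 : ∑ j ∈ ry.index, ∑ n ∈ (ry2 j).index,
      S (ry.left j) * ((ry2 j).left n * S (x * (ry2 j).right n)) = S (x * y) := by
    set L2 : H ⊗[k] (H ⊗[k] H) →ₗ[k] H :=
      LinearMap.mul' k H ∘ₗ TensorProduct.map S
        (LinearMap.mul' k H ∘ₗ TensorProduct.map LinearMap.id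
          (S ∘ₗ LinearMap.mulLeft k x)) with hL2
    have hL2ap : ∀ p q r : H, L2 (p ⊗ₜ[k] (q ⊗ₜ[k] r)) = S p * (q * S (x * r)) := by
      intro p q r
      simp [hL2, LinearMap.mul'_apply]
    have hco2 := congrArg L2 (Coalgebra.sum_tmul_tmul_eq ry ry1 ry2)
    rw [map_sum, map_sum] at hco2
    simp only [map_sum, hL2ap] at hco2
    rw [← hco2]
    have inner : ∀ j ∈ ry.index, ∑ n ∈ (ry1 j).index,
        S ((ry1 j).left n) * ((ry1 j).right n * S (x * ry.right j))
        = ε (ry.left j) • ((S ∘ₗ LinearMap.mulLeft k x) (ry.right j)) := by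
      intro j _
      have : ∀ n, S ((ry1 j).left n) * ((ry1 j).right n * S (x * ry.right j))
          = (S ((ry1 j).left n) * (ry1 j).right n) * S (x * ry.right j) :=
        fun n => (mul_assoc _ _ _).symm
      rw [Finset.sum_congr rfl fun n _ => this n, ← Finset.sum_mul,
        sum_antipode_mul_eq_smul (ry1 j), smul_mul_assoc, one_mul]
      simp
    rw [Finset.sum_congr rfl inner]
    have := ctL y ry (S ∘ₗ LinearMap.mulLeft k x)
    rw [this]
    simp
  rw [step1, step2, step3, step45]

lemma mul_tmul_one_right (w : H ⊗[k] H) (C : H) :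
    w * ((1:H) ⊗ₜ[k] C) = TensorProduct.map LinearMap.id (LinearMap.mulRight k C) w := by
  induction w using TensorProduct.induction_on with
  | zero => simp
  | tmul u v => simp [Algebra.TensorProduct.tmul_mul_tmul]
  | add u v hu hv => rw [add_mul, map_add, hu, hv]

lemma tmul_one_mul_left (w : H ⊗[k] H) (C : H) :
    (C ⊗ₜ[k] (1:H)) * w = TensorProduct.map (LinearMap.mulLeft k C) LinearMap.id w := by
  induction w using TensorProduct.induction_on with
  | zero => simp
  | tmul u v => simp [Algebra.TensorProduct.tmul_mul_tmul]
  | add u v hu hv => rw [mul_add, map_add, hu, hv]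

lemma lemA (Q : H ⊗[k] H) (hQ : ∀ g : H, Q * Coalgebra.comul (R := k) g
      = Coalgebra.comul (R := k) g * Q)
    (d : H) {ιd : Type*} (rd : Coalgebra.Repr k d ιd) :
    Q * (d ⊗ₜ[k] (1:H)) = ∑ m ∈ rd.index,
      Coalgebra.comul (R := k) (rd.left m) * (Q * ((1:H) ⊗ₜ[k] S (rd.right m))) := by
  have rd1 : ∀ m : ιd, Coalgebra.Repr k (rd.left m) (H × H) := fun m => Coalgebra.Repr.arbitrary k _
  have rd2 : ∀ m : ιd, Coalgebra.Repr k (rd.right m) (H × H) := fun m => Coalgebra.Repr.arbitrary k _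
  have main : ∑ m ∈ rd.index, Coalgebra.comul (R := k) (rd.left m) * ((1:H) ⊗ₜ[k] S (rd.right m))
      = d ⊗ₜ[k] (1:H) := by
    set Ψ : H ⊗[k] (H ⊗[k] H) →ₗ[k] H ⊗[k] H :=
      TensorProduct.map LinearMap.id
        (LinearMap.mul' k H ∘ₗ TensorProduct.map LinearMap.id S) with hΨ
    have hco := congrArg Ψ (Coalgebra.sum_tmul_tmul_eq rd rd1 rd2)
    simp only [map_sum, hΨ, TensorProduct.map_tmul, LinearMap.id_coe, id_eq,
      LinearMap.coe_comp, Function.comp_apply, LinearMap.mul'_apply] at hco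
    calc ∑ m ∈ rd.index, Coalgebra.comul (R := k) (rd.left m) * ((1:H) ⊗ₜ[k] S (rd.right m))
        = ∑ m ∈ rd.index, ∑ p ∈ (rd1 m).index,
          (rd1 m).left p ⊗ₜ[k] ((rd1 m).right p * S (rd.right m)) := by
          refine Finset.sum_congr rfl fun m _ => ?_
          rw [mul_tmul_one_right, ← (rd1 m).eq, map_sum]
          simp
      _ = ∑ m ∈ rd.index, ∑ p ∈ (rd2 m).index,
          rd.left m ⊗ₜ[k] ((rd2 m).left p * S ((rd2 m).right p)) := hco
      _ = ∑ m ∈ rd.index, ε (rd.right m) • (rd.left m ⊗ₜ[k] (1:H)) := by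
          refine Finset.sum_congr rfl fun m _ => ?_
          rw [← TensorProduct.tmul_sum, sum_mul_antipode_eq_smul (rd2 m), TensorProduct.tmul_smul]
      _ = d ⊗ₜ[k] (1:H) := by
          have := congrArg (fun z : H => z ⊗ₜ[k] (1:H)) (ctR d rd LinearMap.id)
          simpa [TensorProduct.sum_tmul, TensorProduct.smul_tmul'] using this
  calc Q * (d ⊗ₜ[k] (1:H))
      = Q * ∑ m ∈ rd.index, Coalgebra.comul (R := k) (rd.left m) * ((1:H) ⊗ₜ[k] S (rd.right m)) := by
        rw [main]
    _ = ∑ m ∈ rd.index, Q * (Coalgebra.comul (R := k) (rd.left m) * ((1:H) ⊗ₜ[k] S (rd.right m))) := by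
        rw [Finset.mul_sum]
    _ = _ := by
        refine Finset.sum_congr rfl fun m _ => ?_
        rw [← mul_assoc, hQ, mul_assoc]

lemma lemC (c : H) {ιc : Type*} (rc : Coalgebra.Repr k c ιc) :
    ∑ q ∈ rc.index, ((S (rc.left q)) ⊗ₜ[k] (1:H)) * Coalgebra.comul (R := k) (rc.right q)
      = (1:H) ⊗ₜ[k] c := by
  have rc1 : ∀ q : ιc, Coalgebra.Repr k (rc.left q) (H × H) := fun q => Coalgebra.Repr.arbitrary k _
  have rc2 : ∀ q : ιc, Coalgebra.Repr k (rc.right q) (H × H) := fun q => Coalgebra.Repr.arbitrary k _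
  set Θ : H ⊗[k] (H ⊗[k] H) →ₗ[k] H ⊗[k] H :=
    ((LinearMap.mul' k H ∘ₗ TensorProduct.map S LinearMap.id).rTensor H) ∘ₗ
      (TensorProduct.assoc k H H H).symm.toLinearMap with hΘ
  have hco := congrArg Θ (Coalgebra.sum_tmul_tmul_eq rc rc1 rc2)
  simp only [map_sum, hΘ, LinearMap.coe_comp, LinearEquiv.coe_coe, Function.comp_apply,
    TensorProduct.assoc_symm_tmul, LinearMap.rTensor_tmul, LinearMap.mul'_apply,
    TensorProduct.map_tmul, LinearMap.id_coe, id_eq] at hco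
  calc ∑ q ∈ rc.index, ((S (rc.left q)) ⊗ₜ[k] (1:H)) * Coalgebra.comul (R := k) (rc.right q)
      = ∑ q ∈ rc.index, ∑ p ∈ (rc2 q).index,
        (S (rc.left q) * (rc2 q).left p) ⊗ₜ[k] (rc2 q).right p := by
        refine Finset.sum_congr rfl fun q _ => ?_
        rw [tmul_one_mul_left, ← (rc2 q).eq, map_sum]
        simp
    _ = ∑ q ∈ rc.index, ∑ p ∈ (rc1 q).index,
        (S ((rc1 q).left p) * (rc1 q).right p) ⊗ₜ[k] rc.right q := hco.symm
    _ = ∑ q ∈ rc.index, ε (rc.left q) • ((1:H) ⊗ₜ[k] rc.right q) := by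
        refine Finset.sum_congr rfl fun q _ => ?_
        rw [← TensorProduct.sum_tmul, sum_antipode_mul_eq_smul (rc1 q),
          TensorProduct.smul_tmul']
    _ = (1:H) ⊗ₜ[k] c := by
        have := congrArg (fun z : H => (1:H) ⊗ₜ[k] z) (ctL c rc LinearMap.id)
        simpa [TensorProduct.tmul_sum, TensorProduct.tmul_smul] using this

lemma keyLemma (Q : H ⊗[k] H)
    (hQ : ∀ g : H, Q * Coalgebra.comul (R := k) g = Coalgebra.comul (R := k) g * Q)
    {κ : Type} (t : Finset κ) (c d : κ → H) (h : H)
    (hcd : Coalgebra.comul (R := k) h = ∑ j ∈ t, c j ⊗ₜ[k] d j) :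
    ∑ j ∈ t, (S (c j) ⊗ₜ[k] (1:H)) * Q * (d j ⊗ₜ[k] (1:H))
      = ∑ j ∈ t, ((1:H) ⊗ₜ[k] c j) * Q * ((1:H) ⊗ₜ[k] S (d j)) := by
  have rhl : ∀ j : κ, Coalgebra.Repr k (c j) (H × H) := fun j => Coalgebra.Repr.arbitrary k _
  have rd : ∀ j : κ, Coalgebra.Repr k (d j) (H × H) := fun j => Coalgebra.Repr.arbitrary k _
  set Ξ : H ⊗[k] (H ⊗[k] H) →ₗ[k] H ⊗[k] H :=
    LinearMap.mul' k (H ⊗[k] H) ∘ₗ TensorProduct.map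
      (((TensorProduct.mk k H H).flip (1:H)) ∘ₗ S)
      (LinearMap.mul' k (H ⊗[k] H) ∘ₗ TensorProduct.map (Coalgebra.comul (R := k))
        (LinearMap.mulLeft k Q ∘ₗ TensorProduct.mk k H H (1:H) ∘ₗ S)) with hΞ
  have hΞap : ∀ p q r : H, Ξ (p ⊗ₜ[k] (q ⊗ₜ[k] r))
      = (S p ⊗ₜ[k] (1:H)) * (Coalgebra.comul (R := k) q * (Q * ((1:H) ⊗ₜ[k] S r))) := by
    intro p q r
    simp [hΞ, LinearMap.mul'_apply]
  have hco := congrArg Ξ (Coalgebra.sum_tmul_tmul_eq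
    (⟨t, c, d, hcd.symm⟩ : Coalgebra.Repr k h κ) rhl rd)
  simp only [map_sum, hΞap] at hco
  calc ∑ j ∈ t, (S (c j) ⊗ₜ[k] (1:H)) * Q * (d j ⊗ₜ[k] (1:H))
      = ∑ j ∈ t, (S (c j) ⊗ₜ[k] (1:H)) * (Q * (d j ⊗ₜ[k] (1:H))) := by
        exact Finset.sum_congr rfl fun j _ => mul_assoc _ _ _
    _ = ∑ j ∈ t, ∑ m ∈ (rd j).index, (S (c j) ⊗ₜ[k] (1:H)) *
        (Coalgebra.comul (R := k) ((rd j).left m) * (Q * ((1:H) ⊗ₜ[k] S ((rd j).right m)))) := by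
        refine Finset.sum_congr rfl fun j _ => ?_
        rw [lemA Q hQ (d j) (rd j), Finset.mul_sum]
    _ = ∑ j ∈ t, ∑ p ∈ (rhl j).index, (S ((rhl j).left p) ⊗ₜ[k] (1:H)) *
        (Coalgebra.comul (R := k) ((rhl j).right p) * (Q * ((1:H) ⊗ₜ[k] S (d j)))) := hco.symm
    _ = ∑ j ∈ t, (∑ p ∈ (rhl j).index, (S ((rhl j).left p) ⊗ₜ[k] (1:H)) *
        Coalgebra.comul (R := k) ((rhl j).right p)) * (Q * ((1:H) ⊗ₜ[k] S (d j))) := by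
        refine Finset.sum_congr rfl fun j _ => ?_
        rw [Finset.sum_mul]
        exact Finset.sum_congr rfl fun p _ => (mul_assoc _ _ _).symm
    _ = ∑ j ∈ t, ((1:H) ⊗ₜ[k] c j) * (Q * ((1:H) ⊗ₜ[k] S (d j))) := by
        refine Finset.sum_congr rfl fun j _ => ?_
        rw [lemC (c j) (rhl j)]
    _ = _ := Finset.sum_congr rfl fun j _ => (mul_assoc _ _ _).symm

lemma comm_mul' (x y : H ⊗[k] H) :
    TensorProduct.comm k H H (x * y) = TensorProduct.comm k H H x * TensorProduct.comm k H H y := by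
  induction x using TensorProduct.induction_on with
  | zero => simp
  | tmul x1 x2 =>
    induction y using TensorProduct.induction_on with
    | zero => simp
    | tmul y1 y2 => simp [Algebra.TensorProduct.tmul_mul_tmul]
    | add y1 y2 h1 h2 => simp [mul_add, h1, h2]
  | add x1 x2 h1 h2 => simp [add_mul, h1, h2]

lemma comm_comm' (x : H ⊗[k] H) :
    TensorProduct.comm k H H (TensorProduct.comm k H H x) = x := by
  induction x using TensorProduct.induction_on with
  | zero => simp
  | tmul x1 x2 => simp
  | add x1 x2 h1 h2 => simp [h1, h2]

end Helpers

/-- Let `H` be a finite-dimensional quasitriangular Hopf algebra with `R`-matrix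
`R = Σᵢ aᵢ ⊗ bᵢ` (satisfying `Δᵒᵖ(h) R = R Δ(h)`, `(Δ⊗id)(R) = R₁₃R₂₃`,
`(id⊗Δ)(R) = R₁₃R₁₂`), bijective antipode `S` with inverse `Sinv`, and let `X` be the dual
coadjoint representation `ρ_X(h)(x) = h₍₂₎ x S⁻¹(h₍₁₎)`. Then `ψ_X = S⁻¹ ∘ ψ : X* → X` is a
morphism of `H`-modules: for every `h`, every Sweedler representation `Δ(h) = Σⱼ cⱼ ⊗ dⱼ`,
and every `f ∈ H*`, `ψ_X(ρ_{X*}(h)(f)) = Σⱼ dⱼ ψ_X(f) S⁻¹(cⱼ)` where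
`ρ_{X*}(h)(f) = Σⱼ f(S(cⱼ) · ‒ · dⱼ)`. -/
theorem stmt9 {k H : Type} [Field k] [Ring H] [HopfAlgebra k H] [FiniteDimensional k H]
    (Sinv : H →ₗ[k] H)
    (hS1 : ∀ x : H, Sinv (HopfAlgebra.antipode (R := k) x) = x)
    (hS2 : ∀ x : H, HopfAlgebra.antipode (R := k) (Sinv x) = x)
    {ι : Type} (s : Finset ι) (a b : ι → H)
    (hflip : ∀ h : H,
      ((TensorProduct.comm k H H) (Coalgebra.comul (R := k) h)) * Rmat s a b
        = Rmat s a b * Coalgebra.comul (R := k) h)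
    (hhex1 :
      (TensorProduct.map (Coalgebra.comul (R := k) (A := H)) LinearMap.id) (Rmat s a b)
        = (TensorProduct.map (Algebra.TensorProduct.includeLeft :
              H →ₐ[k] H ⊗[k] H).toLinearMap LinearMap.id (Rmat s a b)) *
          (TensorProduct.map (Algebra.TensorProduct.includeRight :
              H →ₐ[k] H ⊗[k] H).toLinearMap LinearMap.id (Rmat s a b)))
    (hhex2 :
      (TensorProduct.map LinearMap.id (Coalgebra.comul (R := k) (A := H))) (Rmat s a b)
        = (TensorProduct.map LinearMap.id (Algebra.TensorProduct.includeRight :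
              H →ₐ[k] H ⊗[k] H).toLinearMap (Rmat s a b)) *
          (TensorProduct.map LinearMap.id (Algebra.TensorProduct.includeLeft :
              H →ₐ[k] H ⊗[k] H).toLinearMap (Rmat s a b))) :
    ∀ (h : H) (κ : Type) (t : Finset κ) (c d : κ → H),
      Coalgebra.comul (R := k) h = ∑ j ∈ t, c j ⊗ₜ[k] d j →
      ∀ f : H →ₗ[k] k,
        Sinv (drinfeld s a b (∑ j ∈ t, f ∘ₗ
            ((LinearMap.mulRight k (d j)) ∘ₗ
              (LinearMap.mulLeft k (HopfAlgebra.antipode (R := k) (c j))))))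
          = ∑ j ∈ t, d j * Sinv (drinfeld s a b f) * Sinv (c j) := by
  intro h κ t c d hcd f
  classical
  have Sinv_mul : ∀ u v : H, Sinv (u * v) = Sinv v * Sinv u := by
    intro u v
    have h1 : HopfAlgebra.antipode (R := k) (Sinv v * Sinv u) = u * v := by
      rw [antipode_mul', hS2, hS2]
    rw [← h1, hS1]
  have main_eq : drinfeld s a b (∑ j ∈ t, f ∘ₗ
      ((LinearMap.mulRight k (d j)) ∘ₗ
        (LinearMap.mulLeft k (HopfAlgebra.antipode (R := k) (c j)))))
      = ∑ j ∈ t, c j * drinfeld s a b f * HopfAlgebra.antipode (R := k) (d j) := by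
    set R := Rmat (k := k) s a b with hR
    set QQ := (TensorProduct.comm k H H) R * R with hQQdef
    have hQ : ∀ g : H, QQ * Coalgebra.comul (R := k) g = Coalgebra.comul (R := k) g * QQ := by
      intro g
      have h1 := hflip g
      have h2 := congrArg (TensorProduct.comm k H H) h1
      rw [comm_mul', comm_mul', comm_comm'] at h2
      calc QQ * Coalgebra.comul (R := k) g
          = TensorProduct.comm k H H R * (R * Coalgebra.comul (R := k) g) := by
            rw [hQQdef, mul_assoc]
        _ = TensorProduct.comm k H H R *
            (TensorProduct.comm k H H (Coalgebra.comul (R := k) g) * R) := by rw [← h1]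
        _ = (TensorProduct.comm k H H R *
            TensorProduct.comm k H H (Coalgebra.comul (R := k) g)) * R := by rw [mul_assoc]
        _ = (Coalgebra.comul (R := k) g * TensorProduct.comm k H H R) * R := by rw [← h2]
        _ = Coalgebra.comul (R := k) g * QQ := by rw [hQQdef, mul_assoc]
    have Q_eq : QQ = ∑ l ∈ s, ∑ i ∈ s, (b l * a i) ⊗ₜ[k] (a l * b i) := by
      rw [hQQdef, hR]
      simp only [Rmat, map_sum, TensorProduct.comm_tmul]
      rw [Finset.sum_mul_sum]
      exact Finset.sum_congr rfl fun l _ => Finset.sum_congr rfl fun i _ => by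
        simp [Algebra.TensorProduct.tmul_mul_tmul]
    set Φ : H ⊗[k] H →ₗ[k] H :=
      TensorProduct.lift ((LinearMap.lsmul k H) ∘ₗ f) with hΦ
    have hΦap : ∀ x y : H, Φ (x ⊗ₜ[k] y) = f x • y := by
      intro x y; simp [hΦ]
    have key := keyLemma QQ hQ t c d h hcd
    rw [Q_eq] at key
    have EQ := congrArg Φ key
    simp only [Finset.mul_sum, Finset.sum_mul, Algebra.TensorProduct.tmul_mul_tmul, one_mul,
      mul_one, map_sum, hΦap] at EQ
    calc drinfeld s a b (∑ j ∈ t, f ∘ₗ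
          ((LinearMap.mulRight k (d j)) ∘ₗ
            (LinearMap.mulLeft k (HopfAlgebra.antipode (R := k) (c j)))))
        = ∑ i ∈ s, ∑ l ∈ s, ∑ j ∈ t,
          f (HopfAlgebra.antipode (R := k) (c j) * (b l * a i) * d j) • (a l * b i) := by
          simp only [drinfeld, LinearMap.sum_apply, LinearMap.coe_comp, Function.comp_apply,
            LinearMap.mulLeft_apply, LinearMap.mulRight_apply, Finset.sum_smul]
      _ = ∑ j ∈ t, ∑ l ∈ s, ∑ i ∈ s,
          f (HopfAlgebra.antipode (R := k) (c j) * (b l * a i) * d j) • (a l * b i) := by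
          rw [Finset.sum_congr rfl fun i _ => Finset.sum_comm]
          rw [Finset.sum_comm]
          exact Finset.sum_congr rfl fun j _ => Finset.sum_comm
      _ = ∑ j ∈ t, ∑ l ∈ s, ∑ i ∈ s,
          f (b l * a i) • (c j * (a l * b i) * HopfAlgebra.antipode (R := k) (d j)) := EQ
      _ = ∑ j ∈ t, c j * drinfeld s a b f * HopfAlgebra.antipode (R := k) (d j) := by
          refine Finset.sum_congr rfl fun j _ => ?_
          simp only [drinfeld, Finset.mul_sum, Finset.sum_mul, mul_smul_comm, smul_mul_assoc]
          exact Finset.sum_comm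
  rw [main_eq, map_sum]
  refine Finset.sum_congr rfl fun j _ => ?_
  rw [Sinv_mul, hS1, Sinv_mul, mul_assoc]
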